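/- Let F be an undirected forest on n ≥ 2 vertices and k ≥ 2 a natural number. Then every branching k-path vertex cover P of F satisfies |P| ≥ (n + 3k − 1) / (2k). -/

import Mathlib

/-- A rooted directed forest on vertex type `V`, given by a parent map
(edges are oriented from parent to child, i.e. away from the roots),
with no directed cycles. A root is a vertex with no parent. -/
structure RDForest (V : Type) where
  parent : V → Option V
  acyclic : ∀ v : V, ¬ Relation.TransGen (fun a b => parent b = some a) v v

namespace RDForest

variable {V : Type}

/-- Out-degree of a vertex: its number of children. -/
noncomputable def outDeg (F : RDForest V) (v : V) : ℕ :=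
  Nat.card {w | F.parent w = some v}

/-- A leaf is a vertex of out-degree 0. -/
def IsLeaf (F : RDForest V) (v : V) : Prop := F.outDeg v = 0

/-- A branching vertex is a vertex of out-degree at least 2. -/
def IsBranching (F : RDForest V) (v : V) : Prop := 2 ≤ F.outDeg v

/-- `p 0, p 1, …, p (k-1)` is a directed path on `k` vertices
(each successive vertex is a child of the previous one). -/
def IsDPath (F : RDForest V) (k : ℕ) (p : ℕ → V) : Prop :=
  ∀ i, i + 1 < k → F.parent (p (i + 1)) = some (p i)

/-- A branching `k`-path vertex cover of a rooted directed forest: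
all leaves belong to `P`, and every directed path on `k` vertices contains
a branching vertex or a vertex of `P`. -/
def IsBPVC (F : RDForest V) (k : ℕ) (P : Set V) : Prop :=
  (∀ v, F.IsLeaf v → v ∈ P) ∧
  ∀ p : ℕ → V, F.IsDPath k p →
    (∃ i < k, F.IsBranching (p i)) ∨ (∃ i < k, p i ∈ P)

end RDForest

namespace SimpleGraph

variable {V : Type}

/-- Degree of a vertex in an undirected graph. -/
noncomputable def udeg (G : SimpleGraph V) (v : V) : ℕ := Nat.card {w | G.Adj v w}

/-- `p 0, …, p (k-1)` is a path on `k` vertices: consecutive vertices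
are adjacent and all `k` vertices are distinct. -/
def IsUPath (G : SimpleGraph V) (k : ℕ) (p : ℕ → V) : Prop :=
  (∀ i, i + 1 < k → G.Adj (p i) (p (i + 1))) ∧
  (∀ i j, i < k → j < k → p i = p j → i = j)

/-- A branching `k`-path vertex cover of an undirected graph: all vertices of
degree at most 1 belong to `P`, and every path on `k` vertices contains a vertex
of degree at least 3 (a branching vertex) or a vertex of `P`. -/
def IsBPVC (G : SimpleGraph V) (k : ℕ) (P : Set V) : Prop :=
  (∀ v, G.udeg v ≤ 1 → v ∈ P) ∧
  ∀ p : ℕ → V, G.IsUPath k p →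
    (∃ i < k, 3 ≤ G.udeg (p i)) ∨ (∃ i < k, p i ∈ P)

end SimpleGraph


namespace BPVCaux

open SimpleGraph

variable {V : Type}

lemma acyclic_mono {K G : SimpleGraph V} (h : K ≤ G) (hG : G.IsAcyclic) : K.IsAcyclic := by
  intro v c hc
  exact hG (c.mapLe h) (hc.mapLe h)

lemma getVert_mem_support {K : SimpleGraph V} {u v : V} (p : K.Walk u v) {i : ℕ}
    (hi : i ≤ p.length) : p.getVert i ∈ p.support :=
  SimpleGraph.Walk.mem_support_iff_exists_getVert.2 ⟨i, rfl, hi⟩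

lemma getVert_inj {K : SimpleGraph V} {u v : V} (p : K.Walk u v) (hp : p.IsPath) :
    ∀ i j, i ≤ p.length → j ≤ p.length → p.getVert i = p.getVert j → i = j := by
  induction p with
  | nil => intro i j hi hj _; simp at hi hj; omega
  | @cons a b c h q ih =>
    rw [SimpleGraph.Walk.cons_isPath_iff] at hp
    intro i j hi hj hij
    simp only [SimpleGraph.Walk.length_cons] at hi hj
    match i, j with
    | 0, 0 => rfl
    | 0, (j+1) =>
      exfalso
      apply hp.2
      rw [show ((SimpleGraph.Walk.cons h q).getVert 0) = a from SimpleGraph.Walk.getVert_zero _,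
        SimpleGraph.Walk.getVert_cons_succ] at hij
      rw [hij]
      exact getVert_mem_support q (by omega)
    | (i+1), 0 =>
      exfalso
      apply hp.2
      rw [show ((SimpleGraph.Walk.cons h q).getVert 0) = a from SimpleGraph.Walk.getVert_zero _,
        SimpleGraph.Walk.getVert_cons_succ] at hij
      rw [← hij]
      exact getVert_mem_support q (by omega)
    | (i+1), (j+1) =>
      rw [SimpleGraph.Walk.getVert_cons_succ, SimpleGraph.Walk.getVert_cons_succ] at hij
      have := ih hp.1 i j (by omega) (by omega) hij
      omega

/-- In an acyclic graph, a neighbor of the first vertex of a path that lies on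
the path must be the second vertex. -/
lemma nbr_on_path {K : SimpleGraph V} (hK : K.IsAcyclic) {u v z : V} (p : K.Walk u v)
    (hp : p.IsPath) (hadj : K.Adj u z) (hz : z ∈ p.support) : z = p.getVert 1 := by
  classical
  have hq : (p.takeUntil z hz).IsPath := hp.takeUntil hz
  have hr : (SimpleGraph.Walk.cons hadj SimpleGraph.Walk.nil).IsPath := by
    simp [SimpleGraph.Walk.cons_isPath_iff, hadj.ne]
  have := hK.path_unique ⟨p.takeUntil z hz, hq⟩ ⟨SimpleGraph.Walk.cons hadj .nil, hr⟩
  have hlen : (p.takeUntil z hz).length = 1 := by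
    have := congrArg (fun q : K.Path u z => q.1.length) this
    simpa using this
  conv_rhs => rw [← SimpleGraph.Walk.take_spec p hz]
  rw [SimpleGraph.Walk.getVert_append]
  simp [hlen]

/-- First exit of a walk from a set. -/
lemma first_exit {K : SimpleGraph V} (S : Set V) :
    ∀ {u y : V} (w : K.Walk u y), u ∈ S → y ∉ S →
      ∃ a b, K.Adj a b ∧ a ∈ S ∧ b ∉ S := by
  intro u y w
  induction w with
  | nil => intro hu hy; exact absurd hu hy
  | @cons a b c h q ih =>
    intro hu hy
    by_cases hb : b ∈ S
    · exact ih hb hy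
    · exact ⟨a, b, h, hu, hb⟩



 

open SimpleGraph

variable {V : Type}

lemma udeg_eq_ncard (G : SimpleGraph V) (v : V) : G.udeg v = (G.neighborSet v).ncard := rfl

lemma udeg_eq_degree [Fintype V] (G : SimpleGraph V) [DecidableRel G.Adj] (v : V) :
    G.udeg v = G.degree v := by
  rw [udeg_eq_ncard, Set.ncard_eq_toFinset_card', ← SimpleGraph.neighborFinset_def,
    SimpleGraph.card_neighborFinset_eq_degree]

lemma udeg_zero_iff [Finite V] (G : SimpleGraph V) (v : V) :
    G.udeg v = 0 ↔ ∀ w, ¬ G.Adj v w := by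
  rw [udeg_eq_ncard]
  rw [Set.ncard_eq_zero (Set.toFinite _)]
  constructor
  · intro h w hw
    have : w ∈ G.neighborSet v := hw
    simp [h] at this
  · intro h
    ext w
    simp [SimpleGraph.mem_neighborSet]
    exact h w

lemma three_le_udeg [Finite V] (G : SimpleGraph V) {v a b c : V} (ha : G.Adj v a)
    (hb : G.Adj v b) (hc : G.Adj v c) (hab : a ≠ b) (hac : a ≠ c) (hbc : b ≠ c) :
    3 ≤ G.udeg v := by
  rw [udeg_eq_ncard]
  have hsub : ({a, b, c} : Set V) ⊆ G.neighborSet v := by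
    intro x hx
    rcases hx with h | h | h <;> subst h <;> assumption
  have h3 : ({a, b, c} : Set V).ncard = 3 := by
    rw [Set.ncard_eq_three]
    exact ⟨a, b, c, hab, hac, hbc, rfl⟩
  rw [← h3]
  exact Set.ncard_le_ncard hsub (Set.toFinite _)

lemma udeg_two_exists [Finite V] (G : SimpleGraph V) {v : V} (h : G.udeg v = 2) :
    ∃ a b, a ≠ b ∧ G.Adj v a ∧ G.Adj v b ∧ ∀ c, G.Adj v c → c = a ∨ c = b := by
  rw [udeg_eq_ncard, Set.ncard_eq_two] at h
  obtain ⟨a, b, hab, hset⟩ := h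
  refine ⟨a, b, hab, ?_, ?_, ?_⟩
  · have : a ∈ G.neighborSet v := by rw [hset]; simp
    exact this
  · have : b ∈ G.neighborSet v := by rw [hset]; simp
    exact this
  · intro c hc
    have : c ∈ G.neighborSet v := hc
    rw [hset] at this
    simpa using this

/-- An acyclic graph with an edge has a vertex with a unique neighbor. -/
lemma exists_leaf [Fintype V] {K : SimpleGraph V} (hK : K.IsAcyclic)
    (hE : ∃ a b, K.Adj a b) : ∃ x y, K.Adj x y ∧ ∀ z, K.Adj x z → z = y := by
  by_contra hno
  push_neg at hno
  have grow : ∀ m : ℕ, ∃ (u v : V) (p : K.Walk u v), p.IsPath ∧ p.length = m + 1 := by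
    intro m
    induction m with
    | zero =>
      obtain ⟨a, b, hab⟩ := hE
      exact ⟨a, b, SimpleGraph.Walk.cons hab .nil, by
        simp [SimpleGraph.Walk.cons_isPath_iff, hab.ne], by simp⟩
    | succ m ih =>
      obtain ⟨u, v, p, hp, hlen⟩ := ih
      have h1 : K.Adj u (p.getVert 1) := by
        have := p.adj_getVert_succ (i := 0) (by omega)
        simpa using this
      obtain ⟨z, hz, hzne⟩ := hno u (p.getVert 1) h1
      have hzs : z ∉ p.support := fun hmem => hzne (nbr_on_path hK p hp hz hmem)
      exact ⟨z, v, SimpleGraph.Walk.cons hz.symm p,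
        (SimpleGraph.Walk.cons_isPath_iff _ _).2 ⟨hp, hzs⟩, by simp [hlen]⟩
  obtain ⟨u, v, p, hp, hlen⟩ := grow (Fintype.card V)
  have := hp.length_lt
  omega

lemma udeg_ne_zero_iff [Finite V] (K : SimpleGraph V) (v : V) :
    K.udeg v ≠ 0 ↔ ∃ w, K.Adj v w := by
  rw [ne_eq, udeg_zero_iff]
  push_neg
  rfl

/-- The Euler bound: an acyclic graph with an edge has at most `|support| - 1` edges. -/
lemma euler_bound [Fintype V] :
    ∀ (m : ℕ) (K : SimpleGraph V), K.IsAcyclic → K.edgeSet.ncard = m →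
      (∃ a b, K.Adj a b) → m + 1 ≤ {v | K.udeg v ≠ 0}.ncard := by
  intro m
  induction m using Nat.strong_induction_on with
  | _ m ih =>
    intro K hK hKm hE
    obtain ⟨x, y, hxy, huniq⟩ := exists_leaf hK hE
    set K' := K.deleteEdges {s(x, y)} with hK'def
    have hle : K' ≤ K := SimpleGraph.deleteEdges_le _
    have hK'adj : ∀ a b, K'.Adj a b ↔ K.Adj a b ∧ ¬ s(a, b) = s(x, y) := by
      intro a b
      rw [hK'def, SimpleGraph.deleteEdges_adj]
      simp
    have hK'acyc : K'.IsAcyclic := acyclic_mono hle hK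
    have hedges : K'.edgeSet = K.edgeSet \ {s(x, y)} := by
      rw [hK'def, SimpleGraph.edgeSet_deleteEdges]
    have hmem : s(x, y) ∈ K.edgeSet := hxy
    have hm1 : 1 ≤ m := by
      rw [← hKm]
      have : ({s(x,y)} : Set (Sym2 V)).ncard ≤ K.edgeSet.ncard :=
        Set.ncard_le_ncard (by simpa using hmem) (Set.toFinite _)
      simpa using this
    have hxsupp : x ∈ {v | K.udeg v ≠ 0} := by
      simp only [Set.mem_setOf_eq, udeg_ne_zero_iff]
      exact ⟨y, hxy⟩
    have hysupp : y ∈ {v | K.udeg v ≠ 0} := by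
      simp only [Set.mem_setOf_eq, udeg_ne_zero_iff]
      exact ⟨x, hxy.symm⟩
    have hsupp' : {v | K'.udeg v ≠ 0} ⊆ {v | K.udeg v ≠ 0} \ {x} := by
      intro v hv
      simp only [Set.mem_setOf_eq, udeg_ne_zero_iff] at hv
      obtain ⟨w, hw⟩ := hv
      rw [hK'adj] at hw
      constructor
      · simp only [Set.mem_setOf_eq, udeg_ne_zero_iff]
        exact ⟨w, hw.1⟩
      · simp only [Set.mem_singleton_iff]
        rintro rfl
        exact hw.2 (by rw [huniq w hw.1])
    have hcard' : {v | K'.udeg v ≠ 0}.ncard + 1 ≤ {v | K.udeg v ≠ 0}.ncard := by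
      have h1 : {v | K'.udeg v ≠ 0}.ncard ≤ ({v | K.udeg v ≠ 0} \ {x}).ncard :=
        Set.ncard_le_ncard hsupp' (Set.toFinite _)
      have h2 : ({v | K.udeg v ≠ 0} \ {x}).ncard = {v | K.udeg v ≠ 0}.ncard - 1 :=
        Set.ncard_diff_singleton_of_mem hxsupp
      have h3 : 1 ≤ {v | K.udeg v ≠ 0}.ncard := by
        have : ({x} : Set V).ncard ≤ {v | K.udeg v ≠ 0}.ncard :=
          Set.ncard_le_ncard (by simpa using hxsupp) (Set.toFinite _)
        simpa using this
      omega
    by_cases hE' : ∃ a b, K'.Adj a b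
    · have hKm' : K'.edgeSet.ncard = m - 1 := by
        rw [hedges, Set.ncard_diff_singleton_of_mem hmem, hKm]
      have := ih (m - 1) (by omega) K' hK'acyc hKm' hE'
      omega
    · push_neg at hE'
      have hsub : K.edgeSet ⊆ {s(x, y)} := by
        intro e he
        induction e with
        | h a b =>
          by_contra hne
          exact hE' a b ((hK'adj a b).2 ⟨he, by simpa using hne⟩)
      have hm : m ≤ 1 := by
        rw [← hKm]
        have := Set.ncard_le_ncard hsub (Set.toFinite _)
        simpa using this
      have h2 : 2 ≤ {v | K.udeg v ≠ 0}.ncard := by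
        have := (Set.one_lt_ncard_iff (Set.toFinite _)).2 ⟨x, y, hxsupp, hysupp, hxy.ne⟩
        omega
      omega

/-- The subgraph of `G` with both endpoints restricted to `S`. -/
def hgraph (G : SimpleGraph V) (S : Set V) : SimpleGraph V where
  Adj a b := G.Adj a b ∧ a ∈ S ∧ b ∈ S
  symm := by constructor; rintro a b ⟨h, ha, hb⟩; exact ⟨h.symm, hb, ha⟩
  loopless := by constructor; rintro a ⟨h, _⟩; exact G.loopless.irrefl a h

lemma hgraph_le (G : SimpleGraph V) (S : Set V) : hgraph G S ≤ G :=
  fun _ _ h => h.1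

lemma hgraph_support {G : SimpleGraph V} {S : Set V} :
    ∀ {a b : V} (w : (hgraph G S).Walk a b), a ∈ S → ∀ y ∈ w.support, y ∈ S := by
  intro a b w
  induction w with
  | nil => intro ha y hy; simp at hy; rwa [hy]
  | @cons a c b h q ih =>
    intro ha y hy
    rw [SimpleGraph.Walk.support_cons] at hy
    rcases List.mem_cons.1 hy with rfl | hy
    · exact ha
    · exact ih h.2.2 y hy

lemma hgraph_reach {G : SimpleGraph V} {S : Set V} {a b : V}
    (h : (hgraph G S).Reachable a b) (ha : a ∈ S) : b ∈ S := by
  obtain ⟨w⟩ := h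
  exact hgraph_support w ha b w.end_mem_support

lemma other_nbr [Finite V] {G : SimpleGraph V} {u w : V} (h2 : G.udeg u = 2)
    (hw : G.Adj u w) : ∃ z, G.Adj u z ∧ z ≠ w := by
  obtain ⟨a, b, hab, hua, hub, huniq⟩ := udeg_two_exists G h2
  rcases huniq w hw with rfl | rfl
  · exact ⟨b, hub, fun h => hab h.symm⟩
  · exact ⟨a, hua, hab⟩

/-- Path growth inside a connected piece of a "degree ≤ 2" acyclic subgraph. -/
lemma grow [Fintype V] {G H : SimpleGraph V} (hH : H.IsAcyclic)
    (hsub : ∀ a b, H.Adj a b → G.Adj a b)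
    (hdeg2 : ∀ a b, H.Adj a b → G.udeg a = 2) (x : V) :
    ∀ m : ℕ, m + 1 ≤ {y | H.Reachable x y}.ncard →
      ∃ (u v : V) (p : H.Walk u v), p.IsPath ∧ p.length = m ∧
        ∀ y ∈ p.support, H.Reachable x y := by
  intro m
  induction m with
  | zero =>
    intro _
    refine ⟨x, x, .nil, by simp, rfl, ?_⟩
    intro y hy
    simp only [SimpleGraph.Walk.support_nil, List.mem_singleton] at hy
    rw [hy]
  | succ m ih =>
    intro hm
    classical
    obtain ⟨u, v, p, hp, hlen, hsupp⟩ := ih (by omega)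
    have hScard : ({y | y ∈ p.support} : Set V).ncard = m + 1 := by
      have : ({y | y ∈ p.support} : Set V) = ↑p.support.toFinset := by ext z; simp
      rw [this, Set.ncard_coe_finset, List.toFinset_card_of_nodup hp.support_nodup,
        SimpleGraph.Walk.length_support, hlen]
    obtain ⟨y, hyr, hyS⟩ : ∃ y, H.Reachable x y ∧ y ∉ p.support := by
      by_contra hcon
      push_neg at hcon
      have hsub2 : {y | H.Reachable x y} ⊆ {y | y ∈ p.support} := hcon
      have := Set.ncard_le_ncard hsub2 (Set.toFinite _)
      omega
    have hru : H.Reachable u y := (hsupp u p.start_mem_support).symm.trans hyr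
    obtain ⟨W⟩ := hru
    obtain ⟨a, b, hab, haS, hbS⟩ :=
      first_exit {y | y ∈ p.support} W p.start_mem_support hyS
    have hbr : H.Reachable x b := (hsupp a haS).trans hab.reachable
    obtain ⟨i, hgi, hile⟩ := SimpleGraph.Walk.mem_support_iff_exists_getVert.1 haS
    rcases Nat.lt_or_ge 0 i with hi0 | hi0
    · rcases Nat.lt_or_ge i p.length with hiL | hiL
      · -- middle: contradiction via degree
        exfalso
        have hprev : H.Adj (p.getVert (i - 1)) (p.getVert i) := by
          have := p.adj_getVert_succ (i := i - 1) (by omega)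
          have h1 : i - 1 + 1 = i := by omega
          rwa [h1] at this
        have hnext : H.Adj (p.getVert i) (p.getVert (i + 1)) :=
          p.adj_getVert_succ (by omega)
        have hpn : p.getVert (i - 1) ≠ p.getVert (i + 1) := by
          intro h
          have := getVert_inj p hp (i - 1) (i + 1) (by omega) (by omega) h
          omega
        have hbprev : b ≠ p.getVert (i - 1) := by
          intro h; exact hbS (h ▸ getVert_mem_support p (by omega))
        have hbnext : b ≠ p.getVert (i + 1) := by
          intro h; exact hbS (h ▸ getVert_mem_support p (by omega))
        rw [← hgi] at hab
        have h3 : 3 ≤ G.udeg (p.getVert i) :=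
          three_le_udeg G (hsub _ _ hprev.symm) (hsub _ _ hnext)
            (hsub _ _ hab) hpn (fun h => hbprev h.symm) (fun h => hbnext h.symm)
        have h2 : G.udeg (p.getVert i) = 2 := hdeg2 _ _ hab
        omega
      · -- i = length : a = v, extend at the far end
        have hiv : a = v := by rw [← hgi]; have : i = p.length := by omega
                               rw [this, SimpleGraph.Walk.getVert_length]
        subst hiv
        refine ⟨b, u, .cons hab.symm p.reverse, ?_, ?_, ?_⟩
        · rw [SimpleGraph.Walk.cons_isPath_iff]
          refine ⟨hp.reverse, ?_⟩
          rw [SimpleGraph.Walk.support_reverse, List.mem_reverse]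
          exact hbS
        · simp [hlen]
        · intro z hz
          rw [SimpleGraph.Walk.support_cons] at hz
          rcases List.mem_cons.1 hz with rfl | hz
          · exact hbr
          · rw [SimpleGraph.Walk.support_reverse, List.mem_reverse] at hz
            exact hsupp z hz
    · -- i = 0 : a = u, extend at the front
      have hiu : a = u := by rw [← hgi]; have : i = 0 := by omega
                             rw [this, SimpleGraph.Walk.getVert_zero]
      subst hiu
      refine ⟨b, v, .cons hab.symm p, ?_, ?_, ?_⟩
      · rw [SimpleGraph.Walk.cons_isPath_iff]
        exact ⟨hp, hbS⟩
      · simp [hlen]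
      · intro z hz
        rw [SimpleGraph.Walk.support_cons] at hz
        rcases List.mem_cons.1 hz with rfl | hz
        · exact hbr
        · exact hsupp z hz

/-- If the component of `x` in the restricted graph has at least `k` vertices,
there is a `k`-vertex path of `G` inside `S`. -/
lemma comp_card_le [Fintype V] {G : SimpleGraph V} {S : Set V} {P : Set V} {k : ℕ}
    (hG : G.IsAcyclic) (hk : 2 ≤ k) (hP : G.IsBPVC k P)
    (hS2 : ∀ v ∈ S, G.udeg v = 2) (hSP : ∀ v ∈ S, v ∉ P) {x : V} (hx : x ∈ S) :
    {y | (hgraph G S).Reachable x y}.ncard ≤ k - 1 := by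
  set H := hgraph G S with hHdef
  have hHle : H ≤ G := hgraph_le G S
  have hH : H.IsAcyclic := acyclic_mono hHle hG
  by_contra hcon
  have hge : k ≤ {y | H.Reachable x y}.ncard := by omega
  obtain ⟨u, v, p, hp, hlen, hsupp⟩ := grow hH (fun a b h => h.1)
    (fun a b h => hS2 a h.2.1) x (k - 1) (by omega)
  have hU : G.IsUPath k p.getVert := by
    constructor
    · intro i hi
      exact hHle (p.adj_getVert_succ (by omega))
    · intro i j hik hjk hij
      exact getVert_inj p hp i j (by omega) (by omega) hij
  have hmemS : ∀ i < k, p.getVert i ∈ S := by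
    intro i hik
    exact hgraph_reach (hsupp _ (getVert_mem_support p (by omega))) hx
  rcases hP.2 p.getVert hU with ⟨i, hik, h3⟩ | ⟨i, hik, hPm⟩
  · have := hS2 _ (hmemS i hik)
    omega
  · exact hSP _ (hmemS i hik) hPm

/-- Every component of the restricted graph on degree-2 vertices has at least two
entering "darts" from outside `S`. -/
lemma two_darts [Fintype V] {G : SimpleGraph V} {S : Set V}
    (hG : G.IsAcyclic) (hS2 : ∀ v ∈ S, G.udeg v = 2) {x : V} (hx : x ∈ S) :
    ∃ d1 d2 : V × V, d1 ≠ d2 ∧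
      (d1.1 ∉ S ∧ d1.2 ∈ S ∧ G.Adj d1.1 d1.2 ∧ (hgraph G S).Reachable x d1.2) ∧
      (d2.1 ∉ S ∧ d2.2 ∈ S ∧ G.Adj d2.1 d2.2 ∧ (hgraph G S).Reachable x d2.2) := by
  classical
  set H := hgraph G S with hHdef
  have hHle : H ≤ G := hgraph_le G S
  have hH : H.IsAcyclic := acyclic_mono hHle hG
  set C := {y | H.Reachable x y} with hCdef
  have hxC : x ∈ C := SimpleGraph.Reachable.refl x
  have ht1 : 1 ≤ C.ncard := by
    have : ({x} : Set V).ncard ≤ C.ncard :=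
      Set.ncard_le_ncard (by simpa using hxC) (Set.toFinite _)
    simpa using this
  obtain ⟨u, v, p, hp, hlen, hsupp⟩ := grow hH (fun a b h => h.1)
    (fun a b h => hS2 a h.2.1) x (C.ncard - 1) (by rw [← hCdef]; omega)
  -- the support of p is exactly the component C
  have hCsupp : ∀ y, y ∈ p.support ↔ y ∈ C := by
    have hsub2 : {y | y ∈ p.support} ⊆ C := hsupp
    have hcards : C.ncard ≤ ({y | y ∈ p.support} : Set V).ncard := by
      have : ({y | y ∈ p.support} : Set V) = ↑p.support.toFinset := by ext z; simp
      rw [this, Set.ncard_coe_finset, List.toFinset_card_of_nodup hp.support_nodup,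
        SimpleGraph.Walk.length_support, hlen]
      omega
    have := Set.eq_of_subset_of_ncard_le hsub2 hcards (Set.toFinite _)
    intro y
    rw [← this]
    rfl
  have huS : u ∈ S := hgraph_reach (hsupp u p.start_mem_support) hx
  have hvS : v ∈ S := hgraph_reach (hsupp v p.end_mem_support) hx
  rcases Nat.eq_zero_or_pos p.length with h0 | hpos
  · -- single-vertex component
    have huv : u = v := SimpleGraph.Walk.eq_of_length_eq_zero h0
    obtain ⟨a, b, hab, hua, hub, _⟩ := udeg_two_exists G (hS2 u huS)
    have hnot : ∀ z, G.Adj u z → z ∉ S := by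
      intro z hz hzS
      have hadj : H.Adj u z := ⟨hz, huS, hzS⟩
      have hzC : z ∈ C := (hsupp u p.start_mem_support).trans hadj.reachable
      have hzsupp : z ∈ p.support := (hCsupp z).2 hzC
      obtain ⟨i, hgi, hile⟩ := SimpleGraph.Walk.mem_support_iff_exists_getVert.1 hzsupp
      rw [h0] at hile
      have : i = 0 := by omega
      rw [this, SimpleGraph.Walk.getVert_zero] at hgi
      exact G.loopless.irrefl u (hgi ▸ hz)
    refine ⟨(a, u), (b, u), ?_, ⟨hnot a hua, huS, hua.symm,
      hsupp u p.start_mem_support⟩, ⟨hnot b hub, huS, hub.symm,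
      hsupp u p.start_mem_support⟩⟩
    intro h
    exact hab (congrArg Prod.fst h)
  · -- component with at least two vertices
    have huv : u ≠ v := by
      intro h
      have : (0 : ℕ) = p.length := by
        apply getVert_inj p hp 0 p.length (by omega) le_rfl
        rw [SimpleGraph.Walk.getVert_zero, SimpleGraph.Walk.getVert_length, h]
      omega
    have key : ∀ (u' v' : V) (p' : H.Walk u' v'), p'.IsPath → 0 < p'.length →
        (∀ y, y ∈ p'.support ↔ y ∈ C) → u' ∈ S →
        ∃ z, z ∉ S ∧ G.Adj z u' := by
      intro u' v' p' hp' hpos' hCsupp' hu'S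
      have hnext : H.Adj u' (p'.getVert 1) := by
        have := p'.adj_getVert_succ (i := 0) (by omega)
        simpa using this
      obtain ⟨z, hz, hzne⟩ := other_nbr (hS2 u' hu'S) (hHle hnext)
      refine ⟨z, ?_, hz.symm⟩
      intro hzS
      have hadj : H.Adj u' z := ⟨hz, hu'S, hzS⟩
      have hzC : z ∈ C := ((hCsupp' u').1 p'.start_mem_support).trans hadj.reachable
      have hzsupp : z ∈ p'.support := (hCsupp' z).2 hzC
      exact hzne (nbr_on_path hH p' hp' hadj hzsupp)
    obtain ⟨z1, hz1S, hz1adj⟩ := key u v p hp hpos hCsupp huS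
    obtain ⟨z2, hz2S, hz2adj⟩ := key v u p.reverse hp.reverse
      (by rw [SimpleGraph.Walk.length_reverse]; omega)
      (by
        intro y
        rw [SimpleGraph.Walk.support_reverse, List.mem_reverse]
        exact hCsupp y) hvS
    refine ⟨(z1, u), (z2, v), ?_, ⟨hz1S, huS, hz1adj,
      hsupp u p.start_mem_support⟩, ⟨hz2S, hvS, hz2adj,
      hsupp v p.end_mem_support⟩⟩
    intro h
    exact huv (congrArg Prod.snd h)

lemma ncard_setOf [Fintype V] (p : V → Prop) [DecidablePred p] :
    {v | p v}.ncard = (Finset.univ.filter p).card := by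
  rw [Set.ncard_eq_toFinset_card']
  congr 1
  ext v
  simp

end BPVCaux


set_option maxHeartbeats 2000000 in
open BPVCaux in
/-- Lower bound for the undirected case: every branching `k`-path vertex cover of an
undirected forest on `n ≥ 2` vertices has at least `(n + 3k - 1)/(2k)` vertices. -/
theorem stmt2 {V : Type} [Fintype V] (G : SimpleGraph V) (hG : G.IsAcyclic) (k : ℕ)
    (hn : 2 ≤ Nat.card V) (hk : 2 ≤ k) (P : Set V) (hP : G.IsBPVC k P) :
    ((Nat.card V : ℚ) + 3 * k - 1) / (2 * k) ≤ P.ncard := by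
  classical
  have hk0 : (0 : ℚ) < 2 * k := by positivity
  rw [div_le_iff₀ hk0]
  have hkq : (2 : ℚ) ≤ (k : ℚ) := by exact_mod_cast hk
  have hnq : (2 : ℚ) ≤ (Nat.card V : ℚ) := by exact_mod_cast hn
  by_cases hE : ∃ a b, G.Adj a b
  swap
  · -- no edges: P is everything
    push_neg at hE
    have hPuniv : P = Set.univ := by
      rw [Set.eq_univ_iff_forall]
      intro v
      apply hP.1
      have : G.udeg v = 0 := (udeg_zero_iff G v).2 (hE v)
      omega
    rw [hPuniv, Set.ncard_univ]
    nlinarith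
  -- main case
  set S0 : Finset V := Finset.univ.filter (fun v => G.udeg v = 0) with hS0
  set S1 : Finset V := Finset.univ.filter (fun v => G.udeg v = 1) with hS1
  set S2 : Finset V := Finset.univ.filter (fun v => G.udeg v = 2) with hS2
  set S3 : Finset V := Finset.univ.filter (fun v => 3 ≤ G.udeg v) with hS3
  set Sset : Set V := {v | G.udeg v = 2 ∧ v ∉ P} with hSset
  set PD : Finset V := Finset.univ.filter (fun v => G.udeg v = 2 ∧ v ∈ P) with hPD
  set D2 : Finset V := Finset.univ.filter (fun v => v ∈ Sset) with hD2
  -- partition of sums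
  have hdisj01 : Disjoint S0 S1 := by
    rw [Finset.disjoint_left]
    intro a ha hb
    simp [hS0] at ha
    simp [hS1] at hb
    omega
  have hdisj012 : Disjoint (S0 ∪ S1) S2 := by
    rw [Finset.disjoint_left]
    intro a ha hb
    simp [hS0, hS1] at ha
    simp [hS2] at hb
    omega
  have hdisj0123 : Disjoint (S0 ∪ S1 ∪ S2) S3 := by
    rw [Finset.disjoint_left]
    intro a ha hb
    simp [hS0, hS1, hS2] at ha
    simp [hS3] at hb
    omega
  have huniv : S0 ∪ S1 ∪ S2 ∪ S3 = Finset.univ := by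
    ext v
    simp [hS0, hS1, hS2, hS3]
    omega
  have hpart : ∀ f : V → ℕ, ∑ v, f v =
      ∑ v ∈ S0, f v + ∑ v ∈ S1, f v + ∑ v ∈ S2, f v + ∑ v ∈ S3, f v := by
    intro f
    rw [← huniv, Finset.sum_union hdisj0123, Finset.sum_union hdisj012,
      Finset.sum_union hdisj01]
  have hcard4 : S0.card + S1.card + S2.card + S3.card = Fintype.card V := by
    have h := congrArg Finset.card huniv
    rw [Finset.card_union_of_disjoint hdisj0123, Finset.card_union_of_disjoint hdisj012,
      Finset.card_union_of_disjoint hdisj01, Finset.card_univ] at h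
    exact h
  -- split S2
  have hS2split : S2 = PD ∪ D2 := by
    ext v
    simp [hS2, hPD, hD2, hSset]
    tauto
  have hdisjPD : Disjoint PD D2 := by
    rw [Finset.disjoint_left]
    intro a ha hb
    simp [hPD] at ha
    simp [hD2, hSset] at hb
    tauto
  have hcardS2 : S2.card = PD.card + D2.card :=
    hS2split ▸ Finset.card_union_of_disjoint hdisjPD
  -- handshake
  have hudeg : ∀ v, G.udeg v = G.degree v := udeg_eq_degree G
  have hsum_deg : ∑ v, G.udeg v = 2 * G.edgeSet.ncard := by
    have h1 : ∑ v, G.udeg v = ∑ v, G.degree v := Finset.sum_congr rfl fun v _ => hudeg v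
    rw [h1, SimpleGraph.sum_degrees_eq_twice_card_edges, Set.ncard_eq_toFinset_card']
    congr 2
  have heuler := euler_bound G.edgeSet.ncard G hG rfl hE
  have hsupp_card : {v | G.udeg v ≠ 0}.ncard = S1.card + S2.card + S3.card := by
    rw [ncard_setOf]
    have : Finset.univ.filter (fun v => G.udeg v ≠ 0) = S1 ∪ S2 ∪ S3 := by
      ext v
      simp [hS1, hS2, hS3]
      omega
    have hd12 : Disjoint S1 S2 := by
      rw [Finset.disjoint_left]
      intro a ha hb
      simp [hS1] at ha
      simp [hS2] at hb
      omega
    have hd123 : Disjoint (S1 ∪ S2) S3 := by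
      rw [Finset.disjoint_left]
      intro a ha hb
      simp [hS1, hS2] at ha
      simp [hS3] at hb
      omega
    rw [this, Finset.card_union_of_disjoint hd123, Finset.card_union_of_disjoint hd12]
  have hsum0 : ∑ v ∈ S0, G.udeg v = 0 :=
    Finset.sum_eq_zero fun v hv => by simpa [hS0] using hv
  have hsum1 : ∑ v ∈ S1, G.udeg v = S1.card * 1 :=
    Finset.sum_const_nat fun v hv => by simpa [hS1] using hv
  have hsum2 : ∑ v ∈ S2, G.udeg v = S2.card * 2 :=
    Finset.sum_const_nat fun v hv => by simpa [hS2] using hv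
  have hsum3 : S3.card * 3 ≤ ∑ v ∈ S3, G.udeg v := by
    rw [← Finset.sum_const_nat (m := 3) (fun v _ => rfl)]
    exact Finset.sum_le_sum fun v hv => by simpa [hS3] using (Finset.mem_filter.1 hv).2
  set Sig3 : ℕ := ∑ v ∈ S3, G.udeg v with hSig3
  have key1 : Sig3 + 2 ≤ S1.card + 2 * S3.card := by
    have h1 := hpart G.udeg
    rw [hsum_deg, hsum0, hsum1, hsum2] at h1
    omega
  have key0 : S3.card + 2 ≤ S1.card := by omega
  -- P contains the low-degree vertices
  have hPcard : S0.card + S1.card + PD.card ≤ P.ncard := by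
    have hsub : S0 ∪ S1 ∪ PD ⊆ P.toFinset := by
      intro v hv
      rw [Set.mem_toFinset]
      simp only [Finset.mem_union, hS0, hS1, hPD, Finset.mem_filter, Finset.mem_univ,
        true_and] at hv
      rcases hv with (h | h) | h
      · exact hP.1 v (by omega)
      · exact hP.1 v (by omega)
      · exact h.2
    have hdisj : Disjoint (S0 ∪ S1) PD := by
      rw [Finset.disjoint_left]
      intro a ha hb
      simp [hS0, hS1] at ha
      simp [hPD] at hb
      omega
    have := Finset.card_le_card hsub
    rw [Finset.card_union_of_disjoint hdisj, Finset.card_union_of_disjoint hdisj01] at this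
    rw [Set.ncard_eq_toFinset_card']
    omega
  -- components of the restricted graph
  set H : SimpleGraph V := hgraph G Sset with hH
  set cls : V → H.ConnectedComponent := H.connectedComponentMk with hcls
  set CLS : Finset H.ConnectedComponent := D2.image cls with hCLS
  have hS2mem : ∀ v ∈ Sset, G.udeg v = 2 := fun v hv => hv.1
  have hSPmem : ∀ v ∈ Sset, v ∉ P := fun v hv => hv.2
  have hcomp : ∀ x ∈ Sset, (Finset.univ.filter (fun y => H.Reachable x y)).card ≤ k - 1 := by
    intro x hx
    have := comp_card_le hG hk hP hS2mem hSPmem hx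
    rwa [ncard_setOf] at this
  have hd2 : D2.card + CLS.card ≤ k * CLS.card := by
    have h1 : D2.card = ∑ c ∈ CLS, (D2.filter fun a => cls a = c).card := by
      rw [hCLS]; exact Finset.card_eq_sum_card_image cls D2
    have h2 : ∀ c ∈ CLS, (D2.filter fun a => cls a = c).card ≤ k - 1 := by
      intro c hc
      obtain ⟨x, hx, rfl⟩ := Finset.mem_image.1 hc
      have hxS : x ∈ Sset := by simpa [hD2] using hx
      refine le_trans (Finset.card_le_card ?_) (hcomp x hxS)
      intro y hy
      simp only [Finset.mem_filter, Finset.mem_univ, true_and]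
      rw [Finset.mem_filter] at hy
      have := SimpleGraph.ConnectedComponent.eq.1 hy.2
      exact this.symm
    have h3 : D2.card ≤ CLS.card * (k - 1) := by
      rw [h1]
      calc ∑ c ∈ CLS, (D2.filter fun a => cls a = c).card
          ≤ ∑ _c ∈ CLS, (k - 1) := Finset.sum_le_sum h2
        _ = CLS.card * (k - 1) := by rw [Finset.sum_const, smul_eq_mul]
    have h4 : CLS.card * (k - 1) + CLS.card = k * CLS.card := by
      have : k - 1 + 1 = k := by omega
      calc CLS.card * (k - 1) + CLS.card = CLS.card * (k - 1 + 1) := by ring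
        _ = k * CLS.card := by rw [this]; ring
    omega
  -- darts
  set X : Finset (V × V) :=
    Finset.univ.filter (fun q : V × V => q.1 ∉ Sset ∧ q.2 ∈ Sset ∧ G.Adj q.1 q.2) with hX
  have h2cls : 2 * CLS.card ≤ X.card := by
    have h1 : X.card = ∑ c ∈ X.image (fun q => cls q.2),
        (X.filter fun q => cls q.2 = c).card :=
      Finset.card_eq_sum_card_image _ X
    have hsub : CLS ⊆ X.image (fun q => cls q.2) := by
      intro c hc
      obtain ⟨x, hx, rfl⟩ := Finset.mem_image.1 hc
      have hxS : x ∈ Sset := by simpa [hD2] using hx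
      obtain ⟨d1, d2', hne, hd1, hd2'⟩ := two_darts hG hS2mem hxS
      refine Finset.mem_image.2 ⟨d1, ?_, ?_⟩
      · simp only [hX, Finset.mem_filter, Finset.mem_univ, true_and]
        exact ⟨hd1.1, hd1.2.1, hd1.2.2.1⟩
      · exact SimpleGraph.ConnectedComponent.eq.2 hd1.2.2.2.symm
    have h2 : ∀ c ∈ CLS, 2 ≤ (X.filter fun q => cls q.2 = c).card := by
      intro c hc
      obtain ⟨x, hx, rfl⟩ := Finset.mem_image.1 hc
      have hxS : x ∈ Sset := by simpa [hD2] using hx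
      obtain ⟨d1, d2', hne, hd1, hd2'⟩ := two_darts hG hS2mem hxS
      rw [Nat.succ_le_iff]
      apply Finset.one_lt_card.2
      refine ⟨d1, ?_, d2', ?_, hne⟩
      · rw [Finset.mem_filter]
        refine ⟨?_, SimpleGraph.ConnectedComponent.eq.2 hd1.2.2.2.symm⟩
        simp only [hX, Finset.mem_filter, Finset.mem_univ, true_and]
        exact ⟨hd1.1, hd1.2.1, hd1.2.2.1⟩
      · rw [Finset.mem_filter]
        refine ⟨?_, SimpleGraph.ConnectedComponent.eq.2 hd2'.2.2.2.symm⟩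
        simp only [hX, Finset.mem_filter, Finset.mem_univ, true_and]
        exact ⟨hd2'.1, hd2'.2.1, hd2'.2.2.1⟩
    calc 2 * CLS.card = ∑ _c ∈ CLS, 2 := by rw [Finset.sum_const, smul_eq_mul]; ring
      _ ≤ ∑ c ∈ CLS, (X.filter fun q => cls q.2 = c).card := Finset.sum_le_sum h2
      _ ≤ ∑ c ∈ X.image (fun q => cls q.2), (X.filter fun q => cls q.2 = c).card :=
          Finset.sum_le_sum_of_subset hsub
      _ = X.card := h1.symm
  have hXle : X.card ≤ S1.card + 2 * PD.card + Sig3 := by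
    set F : V → ℕ := fun α => (X.filter fun q => q.1 = α).card with hF
    have hXF : X.card = ∑ α, F α :=
      Finset.card_eq_sum_card_fiberwise (fun x _ => Finset.mem_univ x.1)
    have hFdeg : ∀ α, F α ≤ G.udeg α := by
      intro α
      rw [hudeg, ← SimpleGraph.card_neighborFinset_eq_degree]
      apply Finset.card_le_card_of_injOn (fun q => q.2)
      · intro q hq
        simp only [hX, Finset.mem_coe, Finset.mem_filter, Finset.mem_univ, true_and] at hq
        rw [Finset.mem_coe, SimpleGraph.mem_neighborFinset, ← hq.2]
        exact hq.1.2.2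
      · intro q hq q' hq' hqq
        simp only [Finset.mem_coe, Finset.mem_filter] at hq hq'
        exact Prod.ext (hq.2.trans hq'.2.symm) hqq
    have hF0 : ∑ α ∈ S0, F α = 0 := by
      apply Finset.sum_eq_zero
      intro α hα
      have h1 := hFdeg α
      have h2 : G.udeg α = 0 := by simpa [hS0] using hα
      omega
    have hF1 : ∑ α ∈ S1, F α ≤ S1.card * 1 := by
      rw [← hsum1]
      exact Finset.sum_le_sum fun α _ => hFdeg α
    have hF3 : ∑ α ∈ S3, F α ≤ Sig3 :=
      Finset.sum_le_sum fun α _ => hFdeg α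
    have hFD2 : ∑ α ∈ D2, F α = 0 := by
      apply Finset.sum_eq_zero
      intro α hα
      have hαS : α ∈ Sset := by simpa [hD2] using hα
      rw [hF, Finset.card_eq_zero, Finset.eq_empty_iff_forall_notMem]
      intro q hq
      simp only [hX, Finset.mem_filter, Finset.mem_univ, true_and] at hq
      exact hq.1.1 (hq.2 ▸ hαS)
    have hFPD : ∑ α ∈ PD, F α ≤ 2 * PD.card := by
      have : ∀ α ∈ PD, F α ≤ 2 := by
        intro α hα
        have h1 := hFdeg α
        have h2 : G.udeg α = 2 := by
          have := Finset.mem_filter.1 hα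
          simpa [hPD] using this.2.1
        omega
      calc ∑ α ∈ PD, F α ≤ ∑ _α ∈ PD, 2 := Finset.sum_le_sum this
        _ = 2 * PD.card := by rw [Finset.sum_const, smul_eq_mul]; ring
    have hF2 : ∑ α ∈ S2, F α ≤ 2 * PD.card := by
      rw [hS2split, Finset.sum_union hdisjPD, hFD2]
      omega
    rw [hXF, hpart F]
    omega
  have hncls : CLS.card + 1 ≤ S1.card + PD.card + S3.card := by omega
  -- final arithmetic over ℚ
  set n0 : ℕ := S0.card
  set n1 : ℕ := S1.card
  set n3 : ℕ := S3.card
  set pd : ℕ := PD.card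
  set dd : ℕ := D2.card
  set nc : ℕ := CLS.card
  have hnV : (Nat.card V : ℚ) = (n0 : ℚ) + n1 + pd + dd + n3 := by
    rw [Nat.card_eq_fintype_card, ← hcard4, hcardS2]
    push_cast
    ring
  have c1 : (dd : ℚ) + nc ≤ k * nc := by exact_mod_cast hd2
  have c2 : (nc : ℚ) + 1 ≤ n1 + pd + n3 := by exact_mod_cast hncls
  have c3 : (n3 : ℚ) + 2 ≤ n1 := by exact_mod_cast key0
  have c4 : (n0 : ℚ) + n1 + pd ≤ P.ncard := by exact_mod_cast hPcard
  have c5 : (dd : ℚ) ≤ (k - 1) * (n1 + pd + n3 - 1) := by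
    have hknn : (0 : ℚ) ≤ k - 1 := by linarith
    have h1 : (dd : ℚ) ≤ (k - 1) * nc := by nlinarith [c1]
    have h2 : (nc : ℚ) ≤ n1 + pd + n3 - 1 := by linarith
    calc (dd : ℚ) ≤ (k - 1) * nc := h1
      _ ≤ (k - 1) * (n1 + pd + n3 - 1) := by nlinarith
  have c6 : (k : ℚ) * n3 ≤ k * (n1 - 2) := by nlinarith
  have c7 : (k : ℚ) * (n0 + n1 + pd) ≤ k * P.ncard := by nlinarith
  have c8 : (0 : ℚ) ≤ (2 * k - 1) * n0 := by
    have : (0:ℚ) ≤ (n0:ℚ) := by positivity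
    nlinarith
  have c9 : (0 : ℚ) ≤ (k:ℚ) * pd := by positivity
  rw [hnV]
  nlinarith [c5, c6, c7, c8, c9, hkq]
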